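/- Let k be a field of characteristic p > 0, n ≥ 1, A an n×n matrix over k[[z]], and let Ψ be the p-curvature matrix of the connection d/dz + A, i.e. the n×n matrix over k[[z]] with D_A^p(v) = Ψ·v for all v ∈ k[[z]]^n. Then every coefficient of the characteristic polynomial det(t·1 − Ψ) ∈ (k[[z]])[t] has zero formal derivative. (This is the local statement, for GL_n, of the paper's Theorem 3.1: the characteristic polynomial of the p-curvature of a flat connection descends along the Frobenius.) -/

import Mathlib

open PowerSeries

/-- The formal derivative `d/dz` on `k⟦z⟧`. -/
noncomputable def pd (k : Type*) [CommRing k] (f : PowerSeries k) : PowerSeries k :=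
  PowerSeries.derivative k f

/-- The connection operator `D_A = d/dz + A` acting on `k⟦z⟧ⁿ`: `D_A(v) = v′ + A·v`. -/
noncomputable def connOp (k : Type*) [CommRing k] {n : ℕ}
    (A : Matrix (Fin n) (Fin n) (PowerSeries k)) :
    (Fin n → PowerSeries k) → (Fin n → PowerSeries k) :=
  fun v => (fun i => pd k (v i)) + A.mulVec v

open Polynomial Matrix Finset

section Dp

variable (k : Type*) [CommRing k]

@[simp] lemma pd_zero : pd k 0 = 0 := by simp [pd]

@[simp] lemma pd_one : pd k 1 = 0 := by simp [pd]

lemma pd_add (a b : PowerSeries k) : pd k (a + b) = pd k a + pd k b := by simp [pd]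

lemma pd_mul (a b : PowerSeries k) : pd k (a * b) = pd k a * b + a * pd k b := by
  simp only [pd, Derivation.leibniz, smul_eq_mul]; ring

lemma pd_sum {ι : Type*} (s : Finset ι) (f : ι → PowerSeries k) :
    pd k (∑ i ∈ s, f i) = ∑ i ∈ s, pd k (f i) :=
  map_sum (PowerSeries.derivative k).toLinearMap f s

/-- Coefficientwise formal derivative on polynomials over `k⟦z⟧` (bare function). -/
noncomputable def DpFun (f : Polynomial (PowerSeries k)) : Polynomial (PowerSeries k) :=
  ⟨AddMonoidAlgebra.ofCoeff (f.toFinsupp.coeff.mapRange (pd k) (pd_zero k))⟩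

lemma DpFun_coeff (f : Polynomial (PowerSeries k)) (i : ℕ) :
    (DpFun k f).coeff i = pd k (f.coeff i) := by
  rw [DpFun, Polynomial.coeff_ofFinsupp, AddMonoidAlgebra.coeff_ofCoeff, Finsupp.mapRange_apply]
  cases f; rw [Polynomial.coeff_ofFinsupp]

/-- Coefficientwise formal derivative on polynomials over `k⟦z⟧`. -/
noncomputable def Dp : Polynomial (PowerSeries k) →+ Polynomial (PowerSeries k) where
  toFun := DpFun k
  map_zero' := Polynomial.ext fun i => by
    rw [DpFun_coeff]; simp
  map_add' f g := Polynomial.ext fun i => by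
    rw [DpFun_coeff, Polynomial.coeff_add, Polynomial.coeff_add, DpFun_coeff, DpFun_coeff,
      pd_add]

lemma Dp_coeff (f : Polynomial (PowerSeries k)) (i : ℕ) :
    (Dp k f).coeff i = pd k (f.coeff i) :=
  DpFun_coeff k f i

@[simp] lemma Dp_X : Dp k X = 0 := by
  refine Polynomial.ext fun i => ?_
  rw [Dp_coeff, Polynomial.coeff_X]
  split <;> simp

@[simp] lemma Dp_C (a : PowerSeries k) : Dp k (Polynomial.C a) = Polynomial.C (pd k a) := by
  refine Polynomial.ext fun i => ?_
  rw [Dp_coeff, Polynomial.coeff_C, Polynomial.coeff_C]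
  split <;> simp

@[simp] lemma Dp_one : Dp k 1 = 0 := by
  refine Polynomial.ext fun i => ?_
  rw [Dp_coeff, Polynomial.coeff_one]
  split <;> simp

lemma Dp_mul (f g : Polynomial (PowerSeries k)) :
    Dp k (f * g) = Dp k f * g + f * Dp k g := by
  refine Polynomial.ext fun i => ?_
  rw [Polynomial.coeff_add, Dp_coeff, Polynomial.coeff_mul, Polynomial.coeff_mul,
    Polynomial.coeff_mul, pd_sum, ← Finset.sum_add_distrib]
  refine Finset.sum_congr rfl fun x _ => ?_
  rw [pd_mul, Dp_coeff, Dp_coeff]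

lemma Dp_prod {ι : Type*} [DecidableEq ι] (s : Finset ι)
    (f : ι → Polynomial (PowerSeries k)) :
    Dp k (∏ i ∈ s, f i) = ∑ i ∈ s, Dp k (f i) * ∏ j ∈ s.erase i, f j := by
  induction s using Finset.induction_on with
  | empty => simp
  | @insert a s ha ih =>
    rw [Finset.prod_insert ha, Dp_mul, ih, Finset.sum_insert ha, Finset.erase_insert ha,
      Finset.mul_sum]
    refine congrArg ((_ : Polynomial (PowerSeries k)) + ·) ?_
    refine Finset.sum_congr rfl fun x hx => ?_
    rw [Finset.erase_insert_of_ne (Ne.symm (show x ≠ a from fun h => ha (h ▸ hx))),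
      Finset.prod_insert (fun h => ha (Finset.mem_of_mem_erase h))]
    ring

lemma Dp_det {n : ℕ} (M : Matrix (Fin n) (Fin n) (Polynomial (PowerSeries k))) :
    Dp k M.det = Matrix.trace (M.adjugate * M.map (Dp k)) := by
  classical
  have upd : ∀ (i : Fin n), (M.updateCol i fun r => Dp k (M r i)).det
      = ∑ j, M.adjugate i j * Dp k (M j i) := by
    intro i
    rw [← Matrix.cramer_apply, Matrix.cramer_eq_adjugate_mulVec]
    simp [Matrix.mulVec, dotProduct]
  have key : Dp k M.det = ∑ i, (M.updateCol i fun r => Dp k (M r i)).det := by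
    rw [Matrix.det_apply, map_sum]
    have hperm : ∀ σ : Equiv.Perm (Fin n),
        Dp k (Equiv.Perm.sign σ • ∏ i, M (σ i) i)
          = ∑ i, ((Equiv.Perm.sign σ : ℤ) •
              (Dp k (M (σ i) i) * ∏ j ∈ Finset.univ.erase i, M (σ j) j)) := by
      intro σ
      rw [Units.smul_def, map_zsmul, Dp_prod, Finset.smul_sum]
    rw [Finset.sum_congr rfl fun σ _ => hperm σ, Finset.sum_comm]
    refine Finset.sum_congr rfl fun i _ => ?_
    rw [Matrix.det_apply]
    refine Finset.sum_congr rfl fun σ _ => ?_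
    rw [Units.smul_def]
    congr 1
    rw [← Finset.mul_prod_erase _ _ (Finset.mem_univ i), Matrix.updateCol_apply,
      if_pos rfl]
    congr 1
    refine Finset.prod_congr rfl fun j hj => ?_
    rw [Matrix.updateCol_apply, if_neg (Finset.ne_of_mem_erase hj)]
  rw [key, Matrix.trace]
  refine Finset.sum_congr rfl fun i _ => ?_
  rw [upd]
  simp [Matrix.mul_apply, Matrix.map_apply, Matrix.diag_apply]

end Dp

/-- Every coefficient of the characteristic polynomial `det(t·1 − Ψ)` of the
`p`-curvature matrix `Ψ` of the flat connection `d/dz + A` has zero formal derivative. -/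
theorem charpoly_pCurvature_flat (k : Type*) [Field k] (p : ℕ) [Fact p.Prime] [CharP k p]
    (n : ℕ) (hn : 1 ≤ n) (A Ψ : Matrix (Fin n) (Fin n) (PowerSeries k))
    (hΨ : ∀ v : Fin n → PowerSeries k, (connOp k A)^[p] v = Ψ.mulVec v) :
    ∀ i : ℕ, pd k ((Matrix.charpoly Ψ).coeff i) = 0 := by
  classical
  -- D_A commutes with Ψ
  have hcomm : ∀ v : Fin n → PowerSeries k,
      connOp k A (Ψ.mulVec v) = Ψ.mulVec (connOp k A v) := by
    intro v
    rw [← hΨ, ← hΨ, ← Function.iterate_succ_apply' (connOp k A) p v,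
      Function.iterate_succ_apply]
  -- Ψ' = ΨA - AΨ
  have hderiv : Ψ.map (pd k) = Ψ * A - A * Ψ := by
    refine Matrix.ext fun i j => ?_
    have h := congrFun (hcomm (Pi.single j 1)) i
    have hv : connOp k A (Pi.single j 1) = fun i => A i j := by
      funext r
      have h0 : pd k (Pi.single (M := fun _ : Fin n => PowerSeries k) j 1 r) = 0 := by
        rcases eq_or_ne r j with h | h
        · subst h; rw [Pi.single_eq_same, pd_one]
        · rw [Pi.single_eq_of_ne h, pd_zero]
      simp [connOp, Matrix.mulVec_single, h0]
    have hmv : Ψ.mulVec (Pi.single j 1) = fun i => Ψ i j := by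
      funext r; simp [Matrix.mulVec_single]
    rw [hv, hmv] at h
    simp only [connOp, Pi.add_apply] at h
    have h1 : Ψ.mulVec (fun i => A i j) i = (Ψ * A) i j := by
      simp [Matrix.mulVec, Matrix.mul_apply, dotProduct]
    have h2 : A.mulVec (fun i => Ψ i j) i = (A * Ψ) i j := by
      simp [Matrix.mulVec, Matrix.mul_apply, dotProduct]
    rw [h1, h2] at h
    simp only [Matrix.map_apply, Matrix.sub_apply]
    linear_combination h
  -- adjugate of charmatrix commutes with Ψ.map C
  set M := Matrix.charmatrix Ψ with hM
  set ΨC := Ψ.map (Polynomial.C : PowerSeries k → Polynomial (PowerSeries k)) with hΨC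
  have hMdef : M = Matrix.scalar (Fin n) Polynomial.X - ΨC := rfl
  have hadj : M.adjugate * ΨC = ΨC * M.adjugate := by
    have h1 : M.adjugate * (Matrix.scalar (Fin n) Polynomial.X - ΨC)
        = (Matrix.scalar (Fin n) Polynomial.X - ΨC) * M.adjugate := by
      rw [← hMdef, Matrix.adjugate_mul, Matrix.mul_adjugate]
    have hscal : M.adjugate * Matrix.scalar (Fin n) Polynomial.X
        = Matrix.scalar (Fin n) Polynomial.X * M.adjugate :=
      (Matrix.scalar_commute Polynomial.X (fun r => Commute.all _ _) M.adjugate).symm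
    rw [Matrix.mul_sub, Matrix.sub_mul, hscal] at h1
    exact sub_right_inj.mp h1
  -- D of charmatrix
  have hmap : M.map (Dp k) = -((Ψ.map (pd k)).map Polynomial.C) := by
    refine Matrix.ext fun i j => ?_
    rcases eq_or_ne i j with h | h
    · subst h
      simp [hM, Matrix.map_apply, Matrix.charmatrix_apply_eq, map_sub, Dp_coeff]
    · simp [hM, Matrix.map_apply, Matrix.charmatrix_apply_ne _ _ _ h, h]
  -- conclude
  have hdet : Dp k (Matrix.charpoly Ψ) = 0 := by
    have hAC : (Ψ.map (pd k)).map Polynomial.C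
        = ΨC * A.map Polynomial.C - A.map Polynomial.C * ΨC := by
      rw [hderiv]
      refine Matrix.ext fun i j => ?_
      simp [hΨC, Matrix.map_apply, Matrix.sub_apply, Matrix.mul_apply, map_sub, map_sum,
        _root_.map_mul]
    rw [Matrix.charpoly, Dp_det, hmap, hAC]
    set AC := A.map (Polynomial.C : PowerSeries k → Polynomial (PowerSeries k))
    rw [Matrix.mul_neg, Matrix.trace_neg, neg_eq_zero, Matrix.mul_sub, Matrix.trace_sub,
      ← Matrix.mul_assoc, ← Matrix.mul_assoc, hadj,
      Matrix.trace_mul_comm (M.adjugate * AC) ΨC, ← Matrix.mul_assoc, sub_self]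
  intro i
  have := congrArg (fun f => Polynomial.coeff f i) hdet
  simpa [Dp_coeff] using this
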